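/- arXiv:2603.13936 — 2 statements merged into one kernel-verified Lean document; each statement's English description precedes it below -/
import Mathlib

section
/- Let ψ ∈ GL_d(ℤ) have an eigenvalue λ (over ℂ) with |λ| ≥ 2. Then there exists v ∈ ℤ^d such that for all n ≥ 0, the 2^{n+1} elements ∑_{k=0}^{n} ε_k ψ^k(v) with ε_k ∈ {0,1} are pairwise distinct; consequently the set T^{(n)} = {∑_{k=0}^n ε_k ψ^k(v) : ε_k ∈ {0,1}} has cardinality 2^{n+1}. -/
open Matrix Finset

/-- Bound: a `{-1,0,1}`-combination of powers of `lam` below `n` has absolute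
value at most `|lam|^n - 1` when `|lam| ≥ 2`. -/
lemma aux_bound (lam : ℂ) (hlam : 2 ≤ ‖lam‖) (n : ℕ) (a : ℕ → ℂ)
    (ha : ∀ j, ‖a j‖ ≤ 1) :
    ‖∑ j ∈ Finset.range n, a j * lam ^ j‖ ≤ ‖lam‖ ^ n - 1 := by
  have hlam0 : (0:ℝ) < ‖lam‖ := lt_of_lt_of_le two_pos hlam
  induction n with
  | zero => simp
  | succ n ih =>
    rw [Finset.sum_range_succ]
    have h1 : ‖a n * lam ^ n‖ = ‖a n‖ * ‖lam‖ ^ n := by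
      rw [norm_mul, norm_pow]
    have h2 := norm_add_le (∑ j ∈ Finset.range n, a j * lam ^ j) (a n * lam ^ n)
    have h3 : (2:ℝ) * ‖lam‖ ^ n ≤ ‖lam‖ ^ (n + 1) := by
      rw [pow_succ, mul_comm 2 (‖lam‖ ^ n)]
      exact mul_le_mul_of_nonneg_left hlam (pow_nonneg (le_of_lt hlam0) n)
    have h4 := ha n
    have h5 : (0:ℝ) ≤ ‖lam‖ ^ n := pow_nonneg (le_of_lt hlam0) n
    nlinarith

/-- Injectivity of `{0,1}`-combinations of powers of `lam` with `|lam| ≥ 2`. -/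
lemma aux_inj (lam : ℂ) (hlam : 2 ≤ ‖lam‖) :
    ∀ (n : ℕ) (ε ε' : Fin (n + 1) → Bool),
      (∑ j : Fin (n + 1), (if ε j then lam ^ (j : ℕ) else 0))
        = (∑ j : Fin (n + 1), (if ε' j then lam ^ (j : ℕ) else 0)) → ε = ε' := by
  have hlam0 : (0 : ℝ) < ‖lam‖ := lt_of_lt_of_le two_pos hlam
  intro n
  induction n with
  | zero =>
    intro ε ε' h
    funext j
    have hj : j = 0 := Fin.eq_zero j
    subst hj
    by_cases h0 : ε 0 <;> by_cases h1 : ε' 0 <;>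
      simp_all [Finset.filter_singleton]
  | succ n ih =>
    intro ε ε' h
    conv_lhs at h => rw [Fin.sum_univ_castSucc]
    conv_rhs at h => rw [Fin.sum_univ_castSucc]
    -- a helper for the contradictory case
    have key : ∀ ε ε' : Fin (n + 2) → Bool, ε (Fin.last (n + 1)) = true →
        ε' (Fin.last (n + 1)) = false →
        (∑ j : Fin (n + 1), (if ε j.castSucc then lam ^ (j : ℕ) else 0))
          + (if ε (Fin.last (n + 1)) then lam ^ ((Fin.last (n + 1) : Fin (n + 2)) : ℕ) else 0)
        = (∑ j : Fin (n + 1), (if ε' j.castSucc then lam ^ (j : ℕ) else 0))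
          + (if ε' (Fin.last (n + 1)) then lam ^ ((Fin.last (n + 1) : Fin (n + 2)) : ℕ) else 0)
        → False := by
      intro ε ε' he he' heq
      rw [he, he'] at heq
      simp only [if_true, Bool.false_eq_true, if_false, add_zero, Fin.val_last,
        eq_self_iff_true] at heq
      set F : ℕ → ℂ := fun j => if h : j < n + 1 then
        (if ε (Fin.castSucc ⟨j, h⟩) then (1:ℂ) else 0) else 0 with hF
      set G : ℕ → ℂ := fun j => if h : j < n + 1 then
        (if ε' (Fin.castSucc ⟨j, h⟩) then (1:ℂ) else 0) else 0 with hG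
      have h1 : (∑ j : Fin (n + 1), (if ε j.castSucc then lam ^ (j : ℕ) else 0))
          = ∑ j ∈ Finset.range (n + 1), F j * lam ^ j := by
        rw [Finset.sum_range fun j => F j * lam ^ j]
        apply Finset.sum_congr rfl
        intro j _
        simp only [hF, j.isLt, dif_pos, Fin.eta]
        by_cases hj : ε j.castSucc <;> simp [hj]
      have h2 : (∑ j : Fin (n + 1), (if ε' j.castSucc then lam ^ (j : ℕ) else 0))
          = ∑ j ∈ Finset.range (n + 1), G j * lam ^ j := by
        rw [Finset.sum_range fun j => G j * lam ^ j]
        apply Finset.sum_congr rfl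
        intro j _
        simp only [hG, j.isLt, dif_pos, Fin.eta]
        by_cases hj : ε' j.castSucc <;> simp [hj]
      rw [h1, h2] at heq
      have hsum : lam ^ (n + 1)
          = ∑ j ∈ Finset.range (n + 1), (G j - F j) * lam ^ j := by
        simp only [sub_mul]
        rw [Finset.sum_sub_distrib]
        linear_combination heq
      have habs : ∀ x y : Bool,
          ‖(if x then (1:ℂ) else 0) - (if y then 1 else 0)‖ ≤ 1 := by
        intro x y
        cases x <;> cases y <;> simp
      have hb := aux_bound lam hlam (n + 1) (fun j => G j - F j) (by
        intro j
        simp only [hF, hG]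
        by_cases h : j < n + 1
        · simp only [h, dif_pos]
          exact habs _ _
        · simp [h])
      rw [← hsum, norm_pow] at hb
      nlinarith [pow_pos hlam0 (n + 1)]
    by_cases hlast : ε (Fin.last (n + 1)) = ε' (Fin.last (n + 1))
    · rw [hlast] at h
      have h' := add_right_cancel h
      have := ih (fun j => ε j.castSucc) (fun j => ε' j.castSucc) h'
      funext j
      rcases Fin.lastCases (motive := fun j => ε j = ε' j) hlast
        (fun i => congrFun this i) j with h
      exact h
    · cases hε : ε (Fin.last (n + 1)) <;> cases hε' : ε' (Fin.last (n + 1))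
      · exact absurd (hε.trans hε'.symm) hlast
      · exact (key ε' ε hε' hε h.symm).elim
      · exact (key ε ε' hε hε' h).elim
      · exact absurd (hε.trans hε'.symm) hlast

/-- de la Harpe's lemma: a hyperbolic integer matrix admits a vector whose
`{0,1}`-combinations along the orbit are pairwise distinct. -/
theorem stmt8 (d : ℕ) (ψ : Matrix (Fin d) (Fin d) ℤ) (hψ : IsUnit ψ.det)
    (lam : ℂ) (hev : ((ψ.map (Int.cast : ℤ → ℂ)).charpoly).IsRoot lam)
    (hlam : 2 ≤ ‖lam‖) :
    ∃ v : Fin d → ℤ, ∀ n : ℕ,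
      Function.Injective (fun ε : Fin (n + 1) → Bool =>
        ∑ j : Fin (n + 1), (if ε j then (ψ ^ (j : ℕ)).mulVec v else 0)) ∧
      ((Finset.univ : Finset (Fin (n + 1) → Bool)).image (fun ε =>
        ∑ j : Fin (n + 1), (if ε j then (ψ ^ (j : ℕ)).mulVec v else 0))).card
        = 2 ^ (n + 1) := by
  classical
  set M : Matrix (Fin d) (Fin d) ℂ := ψ.map (Int.cast : ℤ → ℂ) with hM
  -- the evaluated characteristic determinant vanishes
  have hdet : (Matrix.scalar (Fin d) lam - M).det = 0 := by
    have h := hev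
    rw [Polynomial.IsRoot, Matrix.charpoly, _root_.eval_det,
      Matrix.matPolyEquiv_charmatrix] at h
    simpa using h
  -- transpose also has vanishing determinant
  have hdetT : (Matrix.scalar (Fin d) lam - Mᵀ).det = 0 := by
    rw [show Matrix.scalar (Fin d) lam - Mᵀ = (Matrix.scalar (Fin d) lam - M)ᵀ by
      rw [Matrix.transpose_sub]
      congr 1
      simp [Matrix.scalar, Matrix.transpose_smul]]
    rw [Matrix.det_transpose]
    exact hdet
  -- get a left eigenvector w
  obtain ⟨w, hw0, hw⟩ := (Matrix.exists_mulVec_eq_zero_iff).mpr hdetT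
  have hweig : Mᵀ *ᵥ w = lam • w := by
    have hs : (Matrix.scalar (Fin d) lam) *ᵥ w = lam • w := by
      funext i
      simp [Matrix.scalar, Matrix.mulVec_diagonal, Pi.algebraMap_apply]
    rw [Matrix.sub_mulVec, sub_eq_zero, hs] at hw
    exact hw.symm
  -- key: w ⬝ᵥ (M^k *ᵥ y) = lam^k * (w ⬝ᵥ y)
  have hpow : ∀ (k : ℕ) (y : Fin d → ℂ), w ⬝ᵥ (M ^ k *ᵥ y) = lam ^ k * (w ⬝ᵥ y) := by
    intro k
    induction k with
    | zero => intro y; simp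
    | succ k ih =>
      intro y
      rw [pow_succ', ← Matrix.mulVec_mulVec]
      rw [show w ⬝ᵥ (M *ᵥ (M ^ k *ᵥ y)) = (w ᵥ* M) ⬝ᵥ (M ^ k *ᵥ y) from
        (Matrix.dotProduct_mulVec w M _)]
      rw [show w ᵥ* M = lam • w by rw [← Matrix.mulVec_transpose]; exact hweig]
      rw [smul_dotProduct, ih, pow_succ']
      rw [smul_eq_mul]
      ring
  -- choose an index with nonzero eigenvector coordinate
  obtain ⟨i0, hi0⟩ : ∃ i, w i ≠ 0 := by
    by_contra hcon
    push_neg at hcon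
    exact hw0 (funext hcon)
  -- v = standard basis vector
  refine ⟨fun i => if i = i0 then 1 else 0, ?_⟩
  set v : Fin d → ℤ := fun i => if i = i0 then 1 else 0 with hv
  have hvC : w ⬝ᵥ (fun i => ((v i : ℤ) : ℂ)) = w i0 := by
    simp [dotProduct, hv, Finset.sum_ite_eq', mul_comm]
  -- cast of powers acting on v
  have hcast : ∀ (k : ℕ), (fun i => (((ψ ^ k) *ᵥ v) i : ℂ)) = (M ^ k) *ᵥ (fun i => ((v i : ℤ) : ℂ)) := by
    intro k
    have hmap : M ^ k = (ψ ^ k).map (Int.cast : ℤ → ℂ) := by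
      rw [hM]
      have : (Int.castRingHom ℂ).mapMatrix ψ ^ k = (Int.castRingHom ℂ).mapMatrix (ψ ^ k) :=
        (map_pow (Int.castRingHom ℂ).mapMatrix ψ k).symm
      simpa [RingHom.mapMatrix_apply] using this
    funext i
    rw [hmap]
    simp [Matrix.mulVec, dotProduct, Matrix.map_apply]
  -- the complex functional applied to the sums
  have hL : ∀ (n : ℕ) (ε : Fin (n + 1) → Bool),
      w ⬝ᵥ (fun i => (((∑ j : Fin (n + 1), (if ε j then (ψ ^ (j : ℕ)) *ᵥ v else 0)) i : ℤ) : ℂ))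
      = (∑ j : Fin (n + 1), (if ε j then lam ^ (j : ℕ) else 0)) * w i0 := by
    intro n ε
    have : (fun i => (((∑ j : Fin (n + 1), (if ε j then (ψ ^ (j : ℕ)) *ᵥ v else 0)) i : ℤ) : ℂ))
        = ∑ j : Fin (n + 1), (if ε j then (fun i => ((((ψ ^ (j : ℕ)) *ᵥ v) i : ℤ) : ℂ)) else 0) := by
      funext i
      simp only [Finset.sum_apply]
      push_cast
      apply Finset.sum_congr rfl
      intro j _
      by_cases hj : ε j <;> simp [hj]
    rw [this]
    have hswap : w ⬝ᵥ (∑ j : Fin (n + 1),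
        (if ε j then (fun i => ((((ψ ^ (j : ℕ)) *ᵥ v) i : ℤ) : ℂ)) else 0))
        = ∑ j : Fin (n + 1),
            w ⬝ᵥ (if ε j then (fun i => ((((ψ ^ (j : ℕ)) *ᵥ v) i : ℤ) : ℂ)) else 0) := by
      simp only [dotProduct, Finset.sum_apply, Finset.mul_sum]
      exact Finset.sum_comm
    rw [hswap, Finset.sum_mul]
    apply Finset.sum_congr rfl
    intro j _
    by_cases hj : ε j
    · simp only [hj, if_true]
      rw [hcast (j : ℕ), hpow (j : ℕ), hvC]
    · simp [hj]
  intro n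
  have hinj : Function.Injective (fun ε : Fin (n + 1) → Bool =>
      ∑ j : Fin (n + 1), (if ε j then (ψ ^ (j : ℕ)).mulVec v else 0)) := by
    intro ε ε' heq
    have heq' : (∑ j : Fin (n + 1), (if ε j then (ψ ^ (j : ℕ)).mulVec v else 0))
        = (∑ j : Fin (n + 1), (if ε' j then (ψ ^ (j : ℕ)).mulVec v else 0)) := heq
    have h1 := hL n ε
    have h2 := hL n ε'
    rw [heq'] at h1
    rw [h1] at h2
    have h3 : (∑ j : Fin (n + 1), (if ε j then lam ^ (j : ℕ) else 0))
        = (∑ j : Fin (n + 1), (if ε' j then lam ^ (j : ℕ) else 0)) :=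
      mul_right_cancel₀ hi0 h2
    exact aux_inj lam hlam n ε ε' h3
  refine ⟨hinj, ?_⟩
  rw [Finset.card_image_of_injective _ hinj]
  simp [Finset.card_univ]
end

section
/- Let H be a Hilbert space and X ⊆ H an orthonormal set. For δ > 0, if Z is a finite-dimensional subspace of H such that every x ∈ X is within distance δ of some z ∈ Z, then dim Z ≥ (1 - δ²)·|X| (Voiculescu's lemma on approximation of orthonormal sets by finite-dimensional subspaces). -/
/-- Voiculescu's lemma: an orthonormal set δ-approximated by a finite-dimensional
subspace forces a lower bound on the dimension. -/
theorem stmt15 {H : Type*} [NormedAddCommGroup H] [InnerProductSpace ℂ H]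
    (X : Finset H) (hX : Orthonormal ℂ (fun x : X => (x : H)))
    (δ : ℝ) (hδ : 0 < δ) (Z : Submodule ℂ H) [FiniteDimensional ℂ Z]
    (happrox : ∀ x ∈ X, ∃ z ∈ Z, ‖x - z‖ < δ) :
    (1 - δ ^ 2) * X.card ≤ (Module.finrank ℂ Z : ℝ) := by
  classical
  set n := Module.finrank ℂ Z with hn
  let b : OrthonormalBasis (Fin n) ℂ Z := stdOrthonormalBasis ℂ Z
  -- norm squared of an element of Z via the basis
  have hnormsq : ∀ v : Z, ‖v‖ ^ 2 = ∑ i, ‖(inner ℂ (b i) v : ℂ)‖ ^ 2 := by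
    intro v
    have h1 : ‖v‖ = ‖b.repr v‖ := (b.repr.norm_map v).symm
    rw [h1, EuclideanSpace.norm_eq, Real.sq_sqrt (by positivity)]
    exact Finset.sum_congr rfl fun i _ => by rw [b.repr_apply_apply]
  -- key pointwise estimate
  have key : ∀ x ∈ X, 1 - δ ^ 2 ≤ ∑ i, ‖(inner ℂ ((b i : H)) x : ℂ)‖ ^ 2 := by
    intro x hx
    obtain ⟨z, hzZ, hz⟩ := happrox x hx
    have hx1 : ‖x‖ = 1 := hX.1 ⟨x, hx⟩
    have hmin : ‖x - Z.orthogonalProjectionOnto x‖ ≤ ‖x - z‖ := by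
      refine (Submodule.starProjection_minimal (U := Z) x).le.trans ?_
      exact ciInf_le ⟨0, fun r ⟨w, hw⟩ => hw ▸ norm_nonneg _⟩ (⟨z, hzZ⟩ : Z)
    have hlt : ‖x - Z.orthogonalProjectionOnto x‖ < δ := lt_of_le_of_lt hmin hz
    have hpyth := Submodule.norm_sq_eq_add_norm_sq_projection x Z
    have horth : ‖(Zᗮ.orthogonalProjectionOnto x : Z ᗮ)‖ = ‖x - Z.orthogonalProjectionOnto x‖ := by
      rw [Submodule.orthogonalProjectionOnto_orthogonal]; rfl
    have hP : 1 - δ ^ 2 ≤ ‖Z.orthogonalProjectionOnto x‖ ^ 2 := by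
      have : ‖(Zᗮ.orthogonalProjectionOnto x : Z ᗮ)‖ ^ 2 ≤ δ ^ 2 := by
        rw [horth]
        exact pow_le_pow_left₀ (norm_nonneg _) hlt.le 2
      nlinarith [hpyth, hx1]
    calc 1 - δ ^ 2 ≤ ‖Z.orthogonalProjectionOnto x‖ ^ 2 := hP
      _ = ∑ i, ‖(inner ℂ (b i) (Z.orthogonalProjectionOnto x) : ℂ)‖ ^ 2 := hnormsq _
      _ = ∑ i, ‖(inner ℂ ((b i : H)) x : ℂ)‖ ^ 2 := by
          refine Finset.sum_congr rfl fun i _ => ?_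
          rw [Submodule.inner_orthogonalProjectionOnto_eq_of_mem_left]
  -- Bessel for each basis vector against the family X
  have bessel : ∀ i : Fin n, ∑ x ∈ X, ‖(inner ℂ ((b i : H)) x : ℂ)‖ ^ 2 ≤ 1 := by
    intro i
    have h := hX.sum_inner_products_le (s := Finset.univ) ((b i : H))
    have hbnorm : ‖(b i : H)‖ = 1 := by
      rw [Submodule.norm_coe]; exact b.orthonormal.1 i
    rw [hbnorm, one_pow] at h
    calc ∑ x ∈ X, ‖(inner ℂ ((b i : H)) x : ℂ)‖ ^ 2
        = ∑ x ∈ X.attach, ‖(inner ℂ ((b i : H)) (x : H) : ℂ)‖ ^ 2 := (X.sum_attach _).symm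
      _ = ∑ x : X, ‖(inner ℂ ((x : H)) ((b i : H)) : ℂ)‖ ^ 2 := by
          refine Finset.sum_congr rfl fun x _ => ?_
          rw [norm_inner_symm]
      _ ≤ 1 := h
  calc (1 - δ ^ 2) * X.card = ∑ _x ∈ X, (1 - δ ^ 2) := by
        rw [Finset.sum_const, nsmul_eq_mul, mul_comm]
    _ ≤ ∑ x ∈ X, ∑ i, ‖(inner ℂ ((b i : H)) x : ℂ)‖ ^ 2 := Finset.sum_le_sum key
    _ = ∑ i : Fin n, ∑ x ∈ X, ‖(inner ℂ ((b i : H)) x : ℂ)‖ ^ 2 := Finset.sum_comm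
    _ ≤ ∑ _i : Fin n, (1 : ℝ) := Finset.sum_le_sum fun i _ => bessel i
    _ = n := by simp
end
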